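/- Let $k$ be a field of characteristic $p$, $F$ and $G$ one-dimensional formal group laws over $k$, and $\phi : F \to G$ a nonzero homomorphism. If $F$ has finite height $n$ and $G$ has finite height $m$, then $n = m$; i.e., a nonzero homomorphism of one-dimensional formal groups over a field of characteristic $p$ can only exist between formal groups of the same height. -/

import Mathlib

/-! Basic theory of one-dimensional formal group laws via explicit substitution
of (multivariable) power series. -/

noncomputable section

open Finset

variable {R : Type} [CommRing R]

/-- The total degree of a monomial exponent. -/
def expDeg {σ : Type} (m : σ →₀ ℕ) : ℕ := m.sum fun _ e => e

/-- Substitution of a multivariable power series `F` (with zero constant term)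
into a one-variable power series `φ`, i.e. `φ(F)`.  The coefficient of a
monomial `m` in `φ(F)` only involves `coeff k φ` for `k ≤ deg m` when `F` has
zero constant term, which justifies the finite sum. -/
def substOne (φ : PowerSeries R) {σ : Type} (F : MvPowerSeries σ R) :
    MvPowerSeries σ R :=
  fun m => ∑ k ∈ Finset.range (expDeg m + 1),
    (PowerSeries.coeff k φ) * (MvPowerSeries.coeff m (F ^ k))

/-- Substitution of two power series `a`, `b` (with zero constant terms) into a
two-variable power series `F`, i.e. `F(a,b)`. -/
def subst2 (F : MvPowerSeries (Fin 2) R) {σ : Type} (a b : MvPowerSeries σ R) :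
    MvPowerSeries σ R :=
  fun m => ∑ ij ∈ Finset.range (expDeg m + 1) ×ˢ Finset.range (expDeg m + 1),
    (MvPowerSeries.coeff (Finsupp.single (0 : Fin 2) ij.1 + Finsupp.single (1 : Fin 2) ij.2) F) *
      (MvPowerSeries.coeff m (a ^ ij.1 * b ^ ij.2))

/-- A one-dimensional (commutative) formal group law over `R`. -/
structure IsFGL (F : MvPowerSeries (Fin 2) R) : Prop where
  constant : MvPowerSeries.constantCoeff F = 0
  left_unit : subst2 F (MvPowerSeries.X (0 : Fin 2)) 0 = MvPowerSeries.X (0 : Fin 2)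
  right_unit : subst2 F 0 (MvPowerSeries.X (1 : Fin 2)) = MvPowerSeries.X (1 : Fin 2)
  comm : subst2 F (MvPowerSeries.X (1 : Fin 2)) (MvPowerSeries.X (0 : Fin 2)) = F
  assoc : subst2 F (subst2 F (MvPowerSeries.X (0 : Fin 3)) (MvPowerSeries.X (1 : Fin 3)))
      (MvPowerSeries.X (2 : Fin 3)) =
    subst2 F (MvPowerSeries.X (0 : Fin 3))
      (subst2 F (MvPowerSeries.X (1 : Fin 3)) (MvPowerSeries.X (2 : Fin 3)))

/-- `φ` is a homomorphism of formal group laws `F → G`:  `φ(F(x,y)) = G(φ(x), φ(y))`. -/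
def IsFGLHom (F G : MvPowerSeries (Fin 2) R) (φ : PowerSeries R) : Prop :=
  PowerSeries.constantCoeff φ = 0 ∧
    substOne φ F =
      subst2 G (substOne φ (MvPowerSeries.X (0 : Fin 2))) (substOne φ (MvPowerSeries.X (1 : Fin 2)))

/-- The `m`-series `[m]_F(x)` of a formal group law, defined by `[0] = 0`,
`[m+1](x) = F([m](x), x)`. -/
def mulSer (F : MvPowerSeries (Fin 2) R) : ℕ → PowerSeries R
  | 0 => 0
  | m + 1 => subst2 F (mulSer F m) PowerSeries.X

/-- `F` has height `n` (at the prime `p`): the `p`-series is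
`c·x^{p^n} + (higher terms)` with `c ≠ 0`. -/
def HasHeight (F : MvPowerSeries (Fin 2) R) (p n : ℕ) : Prop :=
  (∀ m < p ^ n, PowerSeries.coeff m (mulSer F p) = 0) ∧
    PowerSeries.coeff (p ^ n) (mulSer F p) ≠ 0

end


noncomputable section
set_option linter.unusedSectionVars false
variable {R : Type} [CommRing R]
namespace FGLAux

open MvPowerSeries

variable {σ τ υ : Type}

lemma coeff_apply (f : MvPowerSeries σ R) (m : σ →₀ ℕ) : MvPowerSeries.coeff m f = f m := rfl

lemma expDeg_add (a b : σ →₀ ℕ) : expDeg (a + b) = expDeg a + expDeg b :=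
  Finsupp.sum_add_index' (fun _ => rfl) (fun _ _ _ => rfl)

lemma expDeg_zero : expDeg (0 : σ →₀ ℕ) = 0 := by simp [expDeg]

lemma expDeg_single (i : σ) (n : ℕ) : expDeg (Finsupp.single i n) = n := by
  simp [expDeg, Finsupp.sum_single_index]

lemma expDeg_eq_zero {a : σ →₀ ℕ} (h : expDeg a = 0) : a = 0 := by
  ext i
  by_cases hi : i ∈ a.support
  · exact (Finset.sum_eq_zero_iff.mp h i hi)
  · simpa using Finsupp.notMem_support_iff.mp hi

lemma apply_le_expDeg (a : σ →₀ ℕ) (i : σ) : a i ≤ expDeg a := by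
  by_cases hi : i ∈ a.support
  · exact Finset.single_le_sum (fun _ _ => Nat.zero_le _) hi
  · simp [Finsupp.notMem_support_iff.mp hi]

lemma expDeg_fintype [Fintype σ] (a : σ →₀ ℕ) : expDeg a = ∑ i, a i :=
  Finsupp.sum_fintype _ _ fun _ => rfl

/-- Vanishing lemma for powers. -/
lemma coeff_pow_eq_zero [DecidableEq σ] {f : MvPowerSeries σ R}
    (hf : MvPowerSeries.constantCoeff f = 0)
    {k : ℕ} {m : σ →₀ ℕ} (h : expDeg m < k) : MvPowerSeries.coeff m (f ^ k) = 0 := by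
  induction k generalizing m with
  | zero => omega
  | succ k ih =>
    rw [pow_succ, MvPowerSeries.coeff_mul]
    apply Finset.sum_eq_zero
    rintro ⟨m1, m2⟩ hmem
    rw [Finset.HasAntidiagonal.mem_antidiagonal] at hmem
    by_cases h2 : m2 = 0
    · subst h2
      rw [show MvPowerSeries.coeff 0 f = MvPowerSeries.constantCoeff f from rfl, hf,
        mul_zero]
    · have h2' : 1 ≤ expDeg m2 := by
        rcases Nat.eq_zero_or_pos (expDeg m2) with h | h
        · exact absurd (expDeg_eq_zero h) h2
        · exact h
      have hm1 : expDeg m1 < k := by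
        have := expDeg_add m1 m2
        rw [hmem] at this
        omega
      rw [ih hm1, zero_mul]

/-- Vanishing lemma for products. -/
lemma coeff_prod_eq_zero [DecidableEq σ] {ι : Type} (t : Finset ι)
    (f : ι → MvPowerSeries σ R) (k : ι → ℕ)
    (hf : ∀ i ∈ t, ∀ m : σ →₀ ℕ, expDeg m < k i → MvPowerSeries.coeff m (f i) = 0) :
    ∀ m : σ →₀ ℕ, expDeg m < ∑ i ∈ t, k i → MvPowerSeries.coeff m (∏ i ∈ t, f i) = 0 := by
  classical
  induction t using Finset.induction_on with
  | empty => intro m hm; simp at hm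
  | insert _ _ ha ih =>
    rename_i a t
    intro m hm
    rw [Finset.prod_insert ha, MvPowerSeries.coeff_mul]
    apply Finset.sum_eq_zero
    rintro ⟨m1, m2⟩ hmem
    rw [Finset.HasAntidiagonal.mem_antidiagonal] at hmem
    rw [Finset.sum_insert ha] at hm
    have hdeg := expDeg_add m1 m2
    rw [hmem] at hdeg
    by_cases h1 : expDeg m1 < k a
    · rw [hf a (Finset.mem_insert_self a t) m1 h1, zero_mul]
    · have : expDeg m2 < ∑ i ∈ t, k i := by omega
      rw [ih (fun i hi => hf i (Finset.mem_insert_of_mem hi)) m2 this, mul_zero]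

lemma coeff_prodPow_eq_zero [DecidableEq σ] [Fintype τ]
    {s : τ → MvPowerSeries σ R} (hs : ∀ i, MvPowerSeries.constantCoeff (s i) = 0)
    (d : τ →₀ ℕ) {m : σ →₀ ℕ} (h : expDeg m < expDeg d) :
    MvPowerSeries.coeff m (∏ i, s i ^ d i) = 0 := by
  apply coeff_prod_eq_zero Finset.univ _ (fun i => d i)
  · exact fun i _ m' hm' => coeff_pow_eq_zero (hs i) hm'
  · rwa [← expDeg_fintype]

-- NEW PART

variable [Fintype σ] [DecidableEq σ]

def degSet (σ : Type) [Fintype σ] (D : ℕ) : Finset (σ →₀ ℕ) := by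
  classical exact (Finset.Iic (Finsupp.equivFunOnFinite.symm fun _ => D)).filter fun d => expDeg d ≤ D

lemma mem_degSet {D : ℕ} {d : σ →₀ ℕ} : d ∈ degSet σ D ↔ expDeg d ≤ D := by
  simp only [degSet, Finset.mem_filter, Finset.mem_Iic, and_iff_right_iff_imp]
  intro h
  rw [Finsupp.le_def]
  intro i
  simpa using (apply_le_expDeg d i).trans h

def msubst (s : σ → MvPowerSeries τ R) (F : MvPowerSeries σ R) : MvPowerSeries τ R :=
  fun m => ∑ d ∈ degSet σ (expDeg m),
    MvPowerSeries.coeff d F * MvPowerSeries.coeff m (∏ i, s i ^ d i)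

lemma coeff_msubst (s : σ → MvPowerSeries τ R) (F : MvPowerSeries σ R) (m : τ →₀ ℕ) :
    MvPowerSeries.coeff m (msubst s F) = ∑ d ∈ degSet σ (expDeg m),
      MvPowerSeries.coeff d F * MvPowerSeries.coeff m (∏ i, s i ^ d i) := rfl

variable [DecidableEq τ]

lemma coeff_msubst_eq_sum {s : σ → MvPowerSeries τ R}
    (hs : ∀ i, MvPowerSeries.constantCoeff (s i) = 0)
    (F : MvPowerSeries σ R) {m : τ →₀ ℕ} {S : Finset (σ →₀ ℕ)}
    (hS : ∀ d : σ →₀ ℕ, expDeg d ≤ expDeg m → d ∈ S) :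
    MvPowerSeries.coeff m (msubst s F) = ∑ d ∈ S,
      MvPowerSeries.coeff d F * MvPowerSeries.coeff m (∏ i, s i ^ d i) := by
  rw [coeff_msubst]
  have hset : degSet σ (expDeg m) = S.filter fun d => expDeg d ≤ expDeg m := by
    ext d
    simp only [mem_degSet, Finset.mem_filter]
    exact ⟨fun h => ⟨hS d h, h⟩, fun h => h.2⟩
  rw [hset]
  apply Finset.sum_subset (Finset.filter_subset _ _)
  intro d hd hnd
  rw [Finset.mem_filter, not_and] at hnd
  have : expDeg m < expDeg d := by
    have := hnd hd; omega
  rw [coeff_prodPow_eq_zero hs d this, mul_zero]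

lemma msubst_one (s : σ → MvPowerSeries τ R) : msubst s (1 : MvPowerSeries σ R) = 1 := by
  ext m
  rw [coeff_msubst]
  rw [Finset.sum_eq_single (0 : σ →₀ ℕ)]
  · simp
  · intro d _ hd
    rw [MvPowerSeries.coeff_one, if_neg hd, zero_mul]
  · intro h
    exact absurd (mem_degSet.mpr (by simp [expDeg_zero])) h

lemma prod_pow_add (s : σ → MvPowerSeries τ R) (d1 d2 : σ →₀ ℕ) :
    (∏ i, s i ^ (d1 + d2) i) = (∏ i, s i ^ d1 i) * ∏ i, s i ^ d2 i := by
  rw [← Finset.prod_mul_distrib]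
  exact Finset.prod_congr rfl fun i _ => by rw [Finsupp.add_apply, pow_add]

lemma msubst_mul {s : σ → MvPowerSeries τ R}
    (hs : ∀ i, MvPowerSeries.constantCoeff (s i) = 0)
    (A B : MvPowerSeries σ R) :
    msubst s (A * B) = msubst s A * msubst s B := by
  ext m
  set D := expDeg m with hD
  set E := degSet σ D with hE
  have hmemE : ∀ d : σ →₀ ℕ, expDeg d ≤ D → d ∈ E := fun d hd => mem_degSet.mpr hd
  -- RHS
  rw [MvPowerSeries.coeff_mul]
  have hRHS : ∀ q ∈ Finset.HasAntidiagonal.antidiagonal m,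
      MvPowerSeries.coeff q.1 (msubst s A) * MvPowerSeries.coeff q.2 (msubst s B)
      = ∑ p ∈ E ×ˢ E, (MvPowerSeries.coeff p.1 A * MvPowerSeries.coeff q.1 (∏ i, s i ^ p.1 i)) *
          (MvPowerSeries.coeff p.2 B * MvPowerSeries.coeff q.2 (∏ i, s i ^ p.2 i)) := by
    intro q hq
    rw [Finset.HasAntidiagonal.mem_antidiagonal] at hq
    have h1 : expDeg q.1 ≤ D := by
      have := expDeg_add q.1 q.2; rw [hq] at this; omega
    have h2 : expDeg q.2 ≤ D := by
      have := expDeg_add q.1 q.2; rw [hq] at this; omega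
    rw [coeff_msubst_eq_sum hs A (fun d hd => hmemE d (hd.trans h1)),
        coeff_msubst_eq_sum hs B (fun d hd => hmemE d (hd.trans h2)),
        Finset.sum_mul_sum, ← Finset.sum_product']
  rw [Finset.sum_congr rfl hRHS, Finset.sum_comm]
  -- now RHS = ∑ p ∈ E×E, ∑ q ∈ antidiagonal m, ...
  have hRHS2 : ∀ p ∈ E ×ˢ E,
      (∑ q ∈ Finset.HasAntidiagonal.antidiagonal m,
        (MvPowerSeries.coeff p.1 A * MvPowerSeries.coeff q.1 (∏ i, s i ^ p.1 i)) *
          (MvPowerSeries.coeff p.2 B * MvPowerSeries.coeff q.2 (∏ i, s i ^ p.2 i)))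
      = MvPowerSeries.coeff p.1 A * MvPowerSeries.coeff p.2 B *
          MvPowerSeries.coeff m (∏ i, s i ^ (p.1 + p.2) i) := by
    intro p _
    rw [prod_pow_add, MvPowerSeries.coeff_mul, Finset.mul_sum]
    apply Finset.sum_congr rfl
    intro q _
    ring
  rw [Finset.sum_congr rfl hRHS2]
  -- LHS
  have hLHS : ∀ d ∈ E, MvPowerSeries.coeff d (A * B) * MvPowerSeries.coeff m (∏ i, s i ^ d i)
      = ∑ p ∈ Finset.HasAntidiagonal.antidiagonal d,
          MvPowerSeries.coeff p.1 A * MvPowerSeries.coeff p.2 B *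
            MvPowerSeries.coeff m (∏ i, s i ^ (p.1 + p.2) i) := by
    intro d _
    rw [MvPowerSeries.coeff_mul, Finset.sum_mul]
    apply Finset.sum_congr rfl
    intro p hp
    rw [Finset.HasAntidiagonal.mem_antidiagonal] at hp
    rw [hp]
  rw [coeff_msubst, Finset.sum_congr rfl hLHS]
  -- biUnion
  rw [← Finset.sum_biUnion]
  · apply Finset.sum_subset
    · intro p hp
      rw [Finset.mem_biUnion] at hp
      obtain ⟨d, hd, hp⟩ := hp
      rw [Finset.HasAntidiagonal.mem_antidiagonal] at hp
      rw [Finset.mem_product]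
      rw [mem_degSet] at hd
      have := expDeg_add p.1 p.2
      rw [hp] at this
      constructor
      · exact mem_degSet.mpr (by omega)
      · exact mem_degSet.mpr (by omega)
    · intro p hp hnp
      have : expDeg m < expDeg (p.1 + p.2) := by
        by_contra hcon
        push_neg at hcon
        apply hnp
        rw [Finset.mem_biUnion]
        exact ⟨p.1 + p.2, mem_degSet.mpr hcon, Finset.HasAntidiagonal.mem_antidiagonal.mpr rfl⟩
      rw [coeff_prodPow_eq_zero hs _ this, mul_zero]
  · intro d1 h1 d2 h2 hne
    apply Finset.disjoint_left.mpr
    intro p hp1 hp2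
    rw [Finset.HasAntidiagonal.mem_antidiagonal] at hp1 hp2
    exact hne (hp1 ▸ hp2)


lemma msubst_pow {s : σ → MvPowerSeries τ R}
    (hs : ∀ i, MvPowerSeries.constantCoeff (s i) = 0)
    (A : MvPowerSeries σ R) (k : ℕ) :
    msubst s (A ^ k) = (msubst s A) ^ k := by
  induction k with
  | zero => simpa using msubst_one s
  | succ k ih => rw [pow_succ, pow_succ, msubst_mul hs, ih]

lemma msubst_prod {s : σ → MvPowerSeries τ R}
    (hs : ∀ i, MvPowerSeries.constantCoeff (s i) = 0)
    {ι : Type} (t : Finset ι) (f : ι → MvPowerSeries σ R) :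
    msubst s (∏ i ∈ t, f i) = ∏ i ∈ t, msubst s (f i) := by
  classical
  induction t using Finset.induction_on with
  | empty => simpa using msubst_one s
  | insert _ _ ha ih =>
    rename_i a t
    rw [Finset.prod_insert ha, Finset.prod_insert ha, msubst_mul hs, ih]

lemma msubst_prodPow {s : σ → MvPowerSeries τ R}
    (hs : ∀ i, MvPowerSeries.constantCoeff (s i) = 0)
    [Fintype υ] (f : υ → MvPowerSeries σ R) (d : υ →₀ ℕ) :
    msubst s (∏ i, f i ^ d i) = ∏ i, (msubst s (f i)) ^ d i := by
  rw [msubst_prod hs]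
  exact Finset.prod_congr rfl fun i _ => msubst_pow hs _ _

lemma constantCoeff_msubst (s : σ → MvPowerSeries τ R) (F : MvPowerSeries σ R) :
    MvPowerSeries.constantCoeff (msubst s F) = MvPowerSeries.constantCoeff F := by
  have h0 : MvPowerSeries.constantCoeff (msubst s F) =
      MvPowerSeries.coeff (0 : τ →₀ ℕ) (msubst s F) := rfl
  rw [h0, coeff_msubst]
  rw [Finset.sum_eq_single (0 : σ →₀ ℕ)]
  · simp
  · intro d hd hne
    rw [mem_degSet, expDeg_zero, Nat.le_zero] at hd
    exact absurd (expDeg_eq_zero hd) hne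
  · intro h
    exact absurd (mem_degSet.mpr (by simp [expDeg_zero])) h

lemma prod_pow_single (s : σ → MvPowerSeries τ R) (i : σ) :
    (∏ j, s j ^ (Finsupp.single i 1) j) = s i := by
  rw [Finset.prod_eq_single i]
  · simp
  · intro j _ hj
    rw [Finsupp.single_apply, if_neg (Ne.symm hj), pow_zero]
  · intro h; exact absurd (Finset.mem_univ i) h

lemma msubst_X {s : σ → MvPowerSeries τ R}
    (hs : ∀ i, MvPowerSeries.constantCoeff (s i) = 0) (i : σ) :
    msubst s (MvPowerSeries.X i) = s i := by
  ext m
  rw [coeff_msubst]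
  rw [Finset.sum_eq_single (Finsupp.single i 1)]
  · rw [MvPowerSeries.coeff_X, if_pos rfl, one_mul, prod_pow_single]
  · intro d _ hne
    rw [MvPowerSeries.coeff_X, if_neg hne, zero_mul]
  · intro h
    rw [mem_degSet, expDeg_single] at h
    have hm : expDeg m = 0 := by omega
    rw [MvPowerSeries.coeff_X, if_pos rfl, one_mul, prod_pow_single,
      expDeg_eq_zero hm]
    exact hs i

lemma prod_X_pow (d : σ →₀ ℕ) :
    (∏ i, (MvPowerSeries.X i : MvPowerSeries σ R) ^ d i) = MvPowerSeries.monomial d 1 := by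
  have h : ∀ (t : Finset σ) (g : σ → ℕ),
      (∏ i ∈ t, (MvPowerSeries.X i : MvPowerSeries σ R) ^ g i) =
        MvPowerSeries.monomial (∑ i ∈ t, Finsupp.single i (g i)) 1 := by
    intro t g
    induction t using Finset.induction_on with
    | empty => simp
    | insert _ _ ha ih =>
      rename_i a t
      rw [Finset.prod_insert ha, Finset.sum_insert ha, ih, MvPowerSeries.X_pow_eq,
        MvPowerSeries.monomial_mul_monomial, one_mul]
  have hd : (∑ i, Finsupp.single i (d i)) = d :=
    (Finsupp.sum_fintype d Finsupp.single (fun i => Finsupp.single_zero i)).symm.trans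
      (Finsupp.sum_single d)
  rw [h, hd]

lemma msubst_id (F : MvPowerSeries σ R) :
    msubst (fun i => MvPowerSeries.X i) F = F := by
  ext m
  rw [coeff_msubst]
  rw [Finset.sum_eq_single m]
  · simp [prod_X_pow, MvPowerSeries.coeff_monomial]
  · intro d _ hne
    rw [prod_X_pow, MvPowerSeries.coeff_monomial, if_neg (Ne.symm hne), mul_zero]
  · intro h
    exact absurd (mem_degSet.mpr le_rfl) h

lemma msubst_msubst {υ : Type} [Fintype τ] [DecidableEq υ]
    {s : σ → MvPowerSeries τ R} {t : τ → MvPowerSeries υ R}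
    (hs : ∀ i, MvPowerSeries.constantCoeff (s i) = 0)
    (ht : ∀ j, MvPowerSeries.constantCoeff (t j) = 0)
    (F : MvPowerSeries σ R) :
    msubst t (msubst s F) = msubst (fun i => msubst t (s i)) F := by
  ext m
  set D := expDeg m with hD
  have hL : MvPowerSeries.coeff m (msubst t (msubst s F)) =
      ∑ e ∈ degSet τ D, (∑ d ∈ degSet σ D,
        MvPowerSeries.coeff d F * MvPowerSeries.coeff e (∏ i, s i ^ d i)) *
          MvPowerSeries.coeff m (∏ j, t j ^ e j) := by
    rw [coeff_msubst]
    apply Finset.sum_congr rfl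
    intro e he
    rw [mem_degSet] at he
    rw [coeff_msubst_eq_sum hs F (fun d hd => mem_degSet.mpr (hd.trans he))]
  rw [hL, coeff_msubst]
  have hstep : ∀ e ∈ degSet τ D,
      (∑ d ∈ degSet σ D,
        MvPowerSeries.coeff d F * MvPowerSeries.coeff e (∏ i, s i ^ d i)) *
          MvPowerSeries.coeff m (∏ j, t j ^ e j)
      = ∑ d ∈ degSet σ D,
          MvPowerSeries.coeff d F * (MvPowerSeries.coeff e (∏ i, s i ^ d i) *
            MvPowerSeries.coeff m (∏ j, t j ^ e j)) := by
    intro e _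
    rw [Finset.sum_mul]
    exact Finset.sum_congr rfl fun d _ => by ring
  rw [Finset.sum_congr rfl hstep, Finset.sum_comm]
  apply Finset.sum_congr rfl
  intro d _
  rw [← Finset.mul_sum]
  congr 1
  rw [show (∏ i, (msubst t (s i)) ^ d i) = msubst t (∏ i, s i ^ d i) from
    (msubst_prodPow ht _ _).symm]
  rw [coeff_msubst_eq_sum ht _ (fun e he => mem_degSet.mpr he)]


section Bridge

lemma coeff_substOne (φ : PowerSeries R) {σ : Type} (F : MvPowerSeries σ R) (m : σ →₀ ℕ) :
    MvPowerSeries.coeff m (substOne φ F) = ∑ k ∈ Finset.range (expDeg m + 1),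
      (PowerSeries.coeff k φ) * (MvPowerSeries.coeff m (F ^ k)) := rfl

lemma coeff_subst2 (F : MvPowerSeries (Fin 2) R) {σ : Type} (a b : MvPowerSeries σ R)
    (m : σ →₀ ℕ) :
    MvPowerSeries.coeff m (subst2 F a b) =
      ∑ ij ∈ Finset.range (expDeg m + 1) ×ˢ Finset.range (expDeg m + 1),
        (MvPowerSeries.coeff
          (Finsupp.single (0 : Fin 2) ij.1 + Finsupp.single (1 : Fin 2) ij.2) F) *
          (MvPowerSeries.coeff m (a ^ ij.1 * b ^ ij.2)) := rfl

lemma substOne_eq (φ : PowerSeries R) {σ : Type} [Fintype σ] [DecidableEq σ]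
    (F : MvPowerSeries σ R) :
    substOne φ F = msubst (fun _ : Unit => F) (φ : MvPowerSeries Unit R) := by
  ext m
  rw [coeff_substOne, coeff_msubst]
  apply Finset.sum_nbij' (i := fun k => Finsupp.single () k) (j := fun d => d ())
  · intro k hk
    rw [Finset.mem_range] at hk
    rw [mem_degSet, expDeg_single]
    omega
  · intro d hd
    rw [mem_degSet] at hd
    rw [Finset.mem_range]
    have := apply_le_expDeg d ()
    omega
  · intro k _
    simp
  · intro d _
    ext
    simp
  · intro k _
    have h1 : PowerSeries.coeff k φ =
        MvPowerSeries.coeff (Finsupp.single () k) (φ : MvPowerSeries Unit R) := rfl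
    rw [h1]
    congr 2
    rw [Fintype.prod_unique (fun _ : Unit => F ^ (Finsupp.single () k) ())]
    simp

lemma coeff_pow_mul_pow_eq_zero {σ : Type} [DecidableEq σ] {a b : MvPowerSeries σ R}
    (ha : MvPowerSeries.constantCoeff a = 0) (hb : MvPowerSeries.constantCoeff b = 0)
    {i j : ℕ} {m : σ →₀ ℕ} (h : expDeg m < i + j) :
    MvPowerSeries.coeff m (a ^ i * b ^ j) = 0 := by
  rw [MvPowerSeries.coeff_mul]
  apply Finset.sum_eq_zero
  rintro ⟨m1, m2⟩ hmem
  rw [Finset.HasAntidiagonal.mem_antidiagonal] at hmem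
  have hadd := expDeg_add m1 m2
  rw [hmem] at hadd
  by_cases h1 : expDeg m1 < i
  · rw [coeff_pow_eq_zero ha h1, zero_mul]
  · have h2 : expDeg m2 < j := by omega
    rw [coeff_pow_eq_zero hb h2, mul_zero]

lemma expDeg_fin2 (d : Fin 2 →₀ ℕ) : expDeg d = d 0 + d 1 := by
  rw [expDeg_fintype, Fin.sum_univ_two]

lemma subst2_eq (F : MvPowerSeries (Fin 2) R) {σ : Type} [Fintype σ] [DecidableEq σ]
    (a b : MvPowerSeries σ R)
    (ha : MvPowerSeries.constantCoeff a = 0) (hb : MvPowerSeries.constantCoeff b = 0) :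
    subst2 F a b = msubst (fun i : Fin 2 => if i = 0 then a else b) F := by
  ext m
  rw [coeff_subst2, coeff_msubst]
  set D := expDeg m with hD
  rw [show (∑ ij ∈ Finset.range (D + 1) ×ˢ Finset.range (D + 1),
      (MvPowerSeries.coeff
        (Finsupp.single (0 : Fin 2) ij.1 + Finsupp.single (1 : Fin 2) ij.2) F) *
        (MvPowerSeries.coeff m (a ^ ij.1 * b ^ ij.2)))
      = ∑ ij ∈ (Finset.range (D + 1) ×ˢ Finset.range (D + 1)).filter
          (fun ij => ij.1 + ij.2 ≤ D),
        (MvPowerSeries.coeff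
          (Finsupp.single (0 : Fin 2) ij.1 + Finsupp.single (1 : Fin 2) ij.2) F) *
          (MvPowerSeries.coeff m (a ^ ij.1 * b ^ ij.2)) from by
    symm
    apply Finset.sum_subset (Finset.filter_subset _ _)
    intro ij hij hnij
    rw [Finset.mem_filter, not_and] at hnij
    have : D < ij.1 + ij.2 := by
      have := hnij hij; omega
    rw [coeff_pow_mul_pow_eq_zero ha hb this, mul_zero]]
  apply Finset.sum_nbij'
    (i := fun ij => Finsupp.single (0 : Fin 2) ij.1 + Finsupp.single (1 : Fin 2) ij.2)
    (j := fun d => (d 0, d 1))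
  · rintro ⟨i1, i2⟩ hmem
    rw [Finset.mem_filter] at hmem
    rw [mem_degSet, expDeg_add, expDeg_single, expDeg_single]
    exact hmem.2
  · intro d hd
    rw [mem_degSet, expDeg_fin2] at hd
    rw [Finset.mem_filter, Finset.mem_product, Finset.mem_range, Finset.mem_range]
    refine ⟨⟨by omega, by omega⟩, by omega⟩
  · rintro ⟨i1, i2⟩ _
    simp [Finsupp.single_apply]
  · intro d _
    ext x
    fin_cases x <;> simp [Finsupp.single_apply]
  · rintro ⟨i1, i2⟩ _
    congr 1
    rw [Fin.prod_univ_two]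
    congr 2 <;> simp [Finsupp.single_apply]

lemma constantCoeff_substOne (φ : PowerSeries R) {σ : Type} (F : MvPowerSeries σ R) :
    MvPowerSeries.constantCoeff (substOne φ F) = PowerSeries.constantCoeff φ := by
  have h0 : MvPowerSeries.constantCoeff (substOne φ F) =
      MvPowerSeries.coeff (0 : σ →₀ ℕ) (substOne φ F) := rfl
  rw [h0, coeff_substOne, expDeg_zero]
  rw [Finset.sum_range_one]
  simp

lemma constantCoeff_subst2 (F : MvPowerSeries (Fin 2) R) {σ : Type}
    (a b : MvPowerSeries σ R) :
    MvPowerSeries.constantCoeff (subst2 F a b) =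
      MvPowerSeries.constantCoeff F := by
  have h0 : MvPowerSeries.constantCoeff (subst2 F a b) =
      MvPowerSeries.coeff (0 : σ →₀ ℕ) (subst2 F a b) := rfl
  rw [h0, coeff_subst2, expDeg_zero]
  rw [show Finset.range (0 + 1) ×ˢ Finset.range (0 + 1) = {((0 : ℕ), (0 : ℕ))} from by
    rw [Finset.range_one]; rfl]
  rw [Finset.sum_singleton]
  simp [MvPowerSeries.coeff_zero_eq_constantCoeff]

lemma constantCoeff_mulSer {F : MvPowerSeries (Fin 2) R}
    (hF : MvPowerSeries.constantCoeff F = 0) (c : ℕ) :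
    MvPowerSeries.constantCoeff (mulSer F c) = 0 := by
  induction c with
  | zero => simp [mulSer]
  | succ c _ =>
    show MvPowerSeries.constantCoeff (subst2 F (mulSer F c) PowerSeries.X) = 0
    rw [constantCoeff_subst2]
    exact hF

end Bridge

section OrderPart

lemma ps_coeff_pow_eq_zero (g : PowerSeries R) (s : ℕ)
    (hg : ∀ i < s, PowerSeries.coeff i g = 0)
    (k N : ℕ) (h : N < k * s) : PowerSeries.coeff N (g ^ k) = 0 := by
  induction k generalizing N with
  | zero => omega
  | succ k ih =>
    rw [pow_succ, PowerSeries.coeff_mul]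
    apply Finset.sum_eq_zero
    rintro ⟨n1, n2⟩ hmem
    rw [Finset.HasAntidiagonal.mem_antidiagonal] at hmem
    by_cases h2 : n2 < s
    · rw [hg n2 h2, mul_zero]
    · have h1 : n1 < k * s := by
        have hx : (k + 1) * s = k * s + s := by ring
        have hx2 : Nat.succ k * s = k * s + s := Nat.succ_mul k s
        omega
      rw [ih n1 h1, zero_mul]

lemma ps_coeff_pow_lead (g : PowerSeries R) (s : ℕ)
    (hg : ∀ i < s, PowerSeries.coeff i g = 0) (k : ℕ) :
    PowerSeries.coeff (k * s) (g ^ k) = (PowerSeries.coeff s g) ^ k := by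
  induction k with
  | zero => simp
  | succ k ih =>
    rw [pow_succ, PowerSeries.coeff_mul]
    rw [Finset.sum_eq_single ((k * s, s) : ℕ × ℕ)]
    · rw [ih, pow_succ]
    · rintro ⟨n1, n2⟩ hmem hne
      rw [Finset.HasAntidiagonal.mem_antidiagonal] at hmem
      have hsum : (k + 1) * s = k * s + s := by ring
      by_cases h2 : n2 < s
      · rw [hg n2 h2, mul_zero]
      · by_cases h2' : n2 = s
        · exfalso
          apply hne
          have : n1 = k * s := by omega
          rw [this, h2']
        · have h1 : n1 < k * s := by omega
          rw [ps_coeff_pow_eq_zero g s hg k n1 h1, zero_mul]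
    · intro hmem
      exfalso
      apply hmem
      rw [Finset.HasAntidiagonal.mem_antidiagonal]
      have hx : (k + 1) * s = k * s + s := by ring
      omega

lemma coeff_substOne_ps (f g : PowerSeries R) (N : ℕ) :
    PowerSeries.coeff N (substOne f g) = ∑ k ∈ Finset.range (N + 1),
      PowerSeries.coeff k f * PowerSeries.coeff N (g ^ k) := by
  have h : PowerSeries.coeff N (substOne f g) =
      ∑ k ∈ Finset.range (expDeg (Finsupp.single () N) + 1),
        PowerSeries.coeff k f * MvPowerSeries.coeff (Finsupp.single () N) (g ^ k) := rfl
  rw [h, expDeg_single]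
  rfl

lemma substOne_coeff_lt (f g : PowerSeries R) (r s : ℕ)
    (hf : ∀ i < r, PowerSeries.coeff i f = 0) (hg : ∀ i < s, PowerSeries.coeff i g = 0)
    {N : ℕ} (hN : N < r * s) :
    PowerSeries.coeff N (substOne f g) = 0 := by
  rw [coeff_substOne_ps]
  apply Finset.sum_eq_zero
  intro k _
  by_cases hkr : k < r
  · rw [hf k hkr, zero_mul]
  · have : N < k * s := lt_of_lt_of_le hN (Nat.mul_le_mul_right s (not_lt.mp hkr))
    rw [ps_coeff_pow_eq_zero g s hg k N this, mul_zero]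

lemma substOne_coeff_lead (f g : PowerSeries R) (r s : ℕ) (hs : 1 ≤ s)
    (hf : ∀ i < r, PowerSeries.coeff i f = 0) (hg : ∀ i < s, PowerSeries.coeff i g = 0) :
    PowerSeries.coeff (r * s) (substOne f g) =
      PowerSeries.coeff r f * (PowerSeries.coeff s g) ^ r := by
  rw [coeff_substOne_ps]
  rw [Finset.sum_eq_single r]
  · rw [ps_coeff_pow_lead g s hg r]
  · intro k _ hne
    by_cases hkr : k < r
    · rw [hf k hkr, zero_mul]
    · have hkr' : r < k := lt_of_le_of_ne (not_lt.mp hkr) (Ne.symm hne)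
      have : r * s < k * s := Nat.mul_lt_mul_of_lt_of_le hkr' le_rfl (by omega)
      rw [ps_coeff_pow_eq_zero g s hg k (r * s) this, mul_zero]
  · intro h
    exfalso
    apply h
    rw [Finset.mem_range]
    have : r ≤ r * s := Nat.le_mul_of_pos_right r (by omega)
    omega

end OrderPart

section Key

lemma substOne_msubst {σ τ : Type} [Fintype σ] [DecidableEq σ] [Fintype τ] [DecidableEq τ]
    (φ : PowerSeries R) (H : MvPowerSeries σ R)
    (hH : MvPowerSeries.constantCoeff H = 0)
    (t : σ → MvPowerSeries τ R) (ht : ∀ j, MvPowerSeries.constantCoeff (t j) = 0) :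
    msubst t (substOne φ H) = substOne φ (msubst t H) := by
  rw [substOne_eq φ H, msubst_msubst (fun _ => hH) ht, substOne_eq φ (msubst t H)]

lemma substOne_X_right (φ : PowerSeries R) :
    substOne φ (PowerSeries.X : PowerSeries R) = φ := by
  rw [substOne_eq]
  rw [show (fun _ : Unit => (PowerSeries.X : PowerSeries R)) =
    fun i : Unit => (MvPowerSeries.X i : MvPowerSeries Unit R) from rfl, msubst_id]

lemma key_commute {F G : MvPowerSeries (Fin 2) R}
    (hF : MvPowerSeries.constantCoeff F = 0)
    (hG : MvPowerSeries.constantCoeff G = 0)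
    {φ : PowerSeries R} (hφ0 : PowerSeries.constantCoeff φ = 0)
    (hhom : substOne φ F = subst2 G (substOne φ (MvPowerSeries.X (0 : Fin 2)))
      (substOne φ (MvPowerSeries.X (1 : Fin 2))))
    (c : ℕ) :
    substOne φ (mulSer F c) = substOne (mulSer G c) (φ : MvPowerSeries Unit R) := by
  have hXc : MvPowerSeries.constantCoeff (PowerSeries.X : PowerSeries R) = 0 :=
    PowerSeries.constantCoeff_X
  induction c with
  | zero =>
    rw [show mulSer F 0 = 0 from rfl, show mulSer G 0 = 0 from rfl]
    ext N
    rw [coeff_substOne_ps, coeff_substOne_ps]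
    rw [Finset.sum_eq_zero, Finset.sum_eq_zero]
    · intro k _
      rw [map_zero, zero_mul]
    · intro k _
      match k with
      | 0 =>
        rw [PowerSeries.coeff_zero_eq_constantCoeff, hφ0, zero_mul]
      | k + 1 =>
        rw [zero_pow (Nat.succ_ne_zero k), map_zero, mul_zero]
  | succ c ih =>
    have ha : MvPowerSeries.constantCoeff (mulSer F c) = 0 := constantCoeff_mulSer hF c
    have haG : MvPowerSeries.constantCoeff (mulSer G c) = 0 := constantCoeff_mulSer hG c
    have hPφ : MvPowerSeries.constantCoeff
        (substOne φ (MvPowerSeries.X (0 : Fin 2))) = 0 := by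
      rw [constantCoeff_substOne]; exact hφ0
    have hQφ : MvPowerSeries.constantCoeff
        (substOne φ (MvPowerSeries.X (1 : Fin 2))) = 0 := by
      rw [constantCoeff_substOne]; exact hφ0
    have hsab : ∀ i : Fin 2, MvPowerSeries.constantCoeff
        ((fun i : Fin 2 => if i = 0 then ((mulSer F c : PowerSeries R) : MvPowerSeries Unit R)
          else (PowerSeries.X : PowerSeries R)) i) = 0 := by
      intro i
      by_cases hi : i = 0
      · rw [hi]; simpa using ha
      · simpa [hi] using hXc
    have hsPQ : ∀ i : Fin 2, MvPowerSeries.constantCoeff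
        ((fun i : Fin 2 => if i = 0 then substOne φ (MvPowerSeries.X (0 : Fin 2))
          else substOne φ (MvPowerSeries.X (1 : Fin 2))) i) = 0 := by
      intro i
      by_cases hi : i = 0
      · rw [hi]; simpa using hPφ
      · simpa [hi] using hQφ
    have hsAX : ∀ i : Fin 2, MvPowerSeries.constantCoeff
        ((fun i : Fin 2 => if i = 0 then ((mulSer G c : PowerSeries R) : MvPowerSeries Unit R)
          else (PowerSeries.X : PowerSeries R)) i) = 0 := by
      intro i
      by_cases hi : i = 0
      · rw [hi]; simpa using haG
      · simpa [hi] using hXc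
    have htφ : ∀ _ : Unit, MvPowerSeries.constantCoeff (φ : MvPowerSeries Unit R) = 0 :=
      fun _ => hφ0
    -- left side
    have eL : substOne φ (mulSer F (c + 1)) =
        msubst (fun i : Fin 2 => msubst
          (fun i : Fin 2 => if i = 0 then ((mulSer F c : PowerSeries R) : MvPowerSeries Unit R)
            else (PowerSeries.X : PowerSeries R))
          ((fun i : Fin 2 => if i = 0 then substOne φ (MvPowerSeries.X (0 : Fin 2))
            else substOne φ (MvPowerSeries.X (1 : Fin 2))) i)) G := by
      rw [show mulSer F (c + 1) = subst2 F (mulSer F c) PowerSeries.X from rfl]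
      rw [subst2_eq F (mulSer F c) PowerSeries.X ha hXc]
      rw [← substOne_msubst φ F hF _ hsab]
      rw [hhom, subst2_eq G _ _ hPφ hQφ]
      rw [msubst_msubst hsPQ hsab G]
    -- right side
    have eR : substOne (mulSer G (c + 1)) (φ : MvPowerSeries Unit R) =
        msubst (fun i : Fin 2 => msubst (fun _ : Unit => (φ : MvPowerSeries Unit R))
          ((fun i : Fin 2 => if i = 0 then ((mulSer G c : PowerSeries R) : MvPowerSeries Unit R)
            else (PowerSeries.X : PowerSeries R)) i)) G := by
      rw [show mulSer G (c + 1) = subst2 G (mulSer G c) PowerSeries.X from rfl]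
      rw [substOne_eq]
      rw [subst2_eq G (mulSer G c) PowerSeries.X haG hXc]
      rw [msubst_msubst hsAX htφ G]
    rw [eL, eR]
    have hfam : (fun i : Fin 2 => msubst
          (fun i : Fin 2 => if i = 0 then ((mulSer F c : PowerSeries R) : MvPowerSeries Unit R)
            else (PowerSeries.X : PowerSeries R))
          (if i = 0 then substOne φ (MvPowerSeries.X (0 : Fin 2))
            else substOne φ (MvPowerSeries.X (1 : Fin 2))))
        = (fun i : Fin 2 => msubst (fun _ : Unit => (φ : MvPowerSeries Unit R))
            (if i = 0 then ((mulSer G c : PowerSeries R) : MvPowerSeries Unit R)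
              else (PowerSeries.X : PowerSeries R))) := by
      funext i
      by_cases hi : i = 0
      · rw [hi, if_pos rfl, if_pos rfl]
        rw [substOne_msubst φ (MvPowerSeries.X (0 : Fin 2))
          (MvPowerSeries.constantCoeff_X (0 : Fin 2)) _ hsab]
        rw [msubst_X hsab 0]
        rw [if_pos (rfl : (0 : Fin 2) = 0), ih, substOne_eq]
      · rw [if_neg hi, if_neg hi]
        rw [substOne_msubst φ (MvPowerSeries.X (1 : Fin 2))
          (MvPowerSeries.constantCoeff_X (1 : Fin 2)) _ hsab]
        rw [msubst_X hsab 1]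
        rw [if_neg (by decide : ¬ (1 : Fin 2) = 0), substOne_X_right]
        exact (msubst_X htφ ()).symm
    exact congrArg (fun s => msubst s G) hfam

end Key

end FGLAux
end

/-- A nonzero homomorphism of one-dimensional formal group
laws over a field of characteristic `p` can only exist between formal groups of
the same height. -/
theorem height_eq_of_nonzero_hom
    (k : Type) [Field k] (p : ℕ) (hp : p.Prime) [CharP k p]
    (F G : MvPowerSeries (Fin 2) k) (hF : IsFGL F) (hG : IsFGL G)
    (φ : PowerSeries k) (hφ : IsFGLHom F G φ) (hne : φ ≠ 0)
    (n m : ℕ) (hhtF : HasHeight F p n) (hhtG : HasHeight G p m) :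
    n = m := by
  classical
  obtain ⟨hc0, heq⟩ := hφ
  have hkey : substOne φ (mulSer F p) = substOne (mulSer G p) (φ : MvPowerSeries Unit k) :=
    FGLAux.key_commute hF.constant hG.constant hc0 heq p
  have hex : ∃ i, PowerSeries.coeff i φ ≠ 0 := by
    by_contra h
    push_neg at h
    exact hne (PowerSeries.ext fun i => by rw [h i, map_zero])
  set r := Nat.find hex with hrdef
  have hr : PowerSeries.coeff r φ ≠ 0 := Nat.find_spec hex
  have hrmin : ∀ i < r, PowerSeries.coeff i φ = 0 := fun i hi =>
    not_not.mp (Nat.find_min hex hi)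
  have hr1 : 1 ≤ r := by
    rcases Nat.eq_zero_or_pos r with h0 | h
    · exfalso
      apply hr
      rw [h0, PowerSeries.coeff_zero_eq_constantCoeff]
      exact hc0
    · exact h
  obtain ⟨hFlt, hFne⟩ := hhtF
  obtain ⟨hGlt, hGne⟩ := hhtG
  have hpn1 : 1 ≤ p ^ n := Nat.one_le_pow n p hp.pos
  have hpm1 : 1 ≤ p ^ m := Nat.one_le_pow m p hp.pos
  have hlead1 : PowerSeries.coeff (r * p ^ n) (substOne φ (mulSer F p)) ≠ 0 := by
    rw [FGLAux.substOne_coeff_lead φ (mulSer F p) r (p ^ n) hpn1 hrmin hFlt]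
    exact mul_ne_zero hr (pow_ne_zero r hFne)
  have hlead2 : PowerSeries.coeff (p ^ m * r)
      (substOne (mulSer G p) (φ : MvPowerSeries Unit k)) ≠ 0 := by
    rw [FGLAux.substOne_coeff_lead (mulSer G p) φ (p ^ m) r hr1 hGlt hrmin]
    exact mul_ne_zero hGne (pow_ne_zero _ hr)
  have h1 : ¬ (r * p ^ n < p ^ m * r) := fun hlt => by
    apply hlead1
    rw [hkey]
    exact FGLAux.substOne_coeff_lt (mulSer G p) φ (p ^ m) r hGlt hrmin hlt
  have h2 : ¬ (p ^ m * r < r * p ^ n) := fun hlt => by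
    apply hlead2
    rw [← hkey]
    exact FGLAux.substOne_coeff_lt φ (mulSer F p) r (p ^ n) hrmin hFlt hlt
  have hab : r * p ^ n = p ^ m * r := by omega
  have heqn : r * p ^ n = r * p ^ m := by rw [hab, Nat.mul_comm]
  have hpow : p ^ n = p ^ m := Nat.eq_of_mul_eq_mul_left (by omega) heqn
  exact Nat.pow_right_injective hp.two_le hpow
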